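/- For every vertex v of a finite simple graph G, the number of Naji solutions of G equals the number of Naji solutions of the local complement G^v: |B(G)| = |B(G^v)|. -/

import Mathlib

/-- A Naji solution of the simple graph `G`: an assignment of `GF(2)` values to ordered
pairs of distinct vertices (encoded as a function `V → V → ZMod 2` vanishing on the
diagonal) satisfying Naji's equations (a), (b), (c). -/
def NajiSolution {V : Type*} (G : SimpleGraph V) (β : V → V → ZMod 2) : Prop :=
  (∀ v, β v v = 0) ∧
  (∀ v w, G.Adj v w → β v w + β w v = 1) ∧
  (∀ v w x : V, v ≠ w → v ≠ x → w ≠ x →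
    G.Adj v w → ¬ G.Adj v x → ¬ G.Adj w x → β x v + β x w = 0) ∧
  (∀ v w x : V, v ≠ w → v ≠ x → w ≠ x →
    G.Adj v w → G.Adj v x → ¬ G.Adj w x →
    β v w + β v x + β w x + β x w = 1)

/-- The local complement of `G` at `v`: the adjacency of every pair of neighbours of `v`
is reversed, all other adjacencies are unchanged. -/
def localComp {V : Type*} (G : SimpleGraph V) (v : V) : SimpleGraph V where
  Adj x y := x ≠ y ∧ Xor' (G.Adj x y) (G.Adj v x ∧ G.Adj v y)
  symm := ⟨by
    rintro x y ⟨h1, h2⟩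
    refine ⟨h1.symm, ?_⟩
    rwa [G.adj_comm y x, and_comm]⟩
  loopless := ⟨fun _ h => h.1 rfl⟩

/-- Two graphs are locally equivalent if one is obtained from the other by a sequence of
local complementations. -/
def LocallyEquivalent {V : Type*} (G H : SimpleGraph V) : Prop :=
  Relation.ReflTransGen (fun A B => ∃ v : V, B = localComp A v) G H

section helpers
variable {V : Type*} (G : SimpleGraph V) (v : V)

lemma localComp_adj {x y : V} : (localComp G v).Adj x y ↔ x ≠ y ∧ Xor' (G.Adj x y) (G.Adj v x ∧ G.Adj v y) := Iff.rfl

lemma localComp_adj_v {x : V} : (localComp G v).Adj v x ↔ G.Adj v x := by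
  simp only [localComp_adj, Xor']
  constructor
  · rintro ⟨h1, ⟨h2, _⟩ | ⟨⟨hvv, _⟩, _⟩⟩
    · exact h2
    · exact absurd hvv (G.irrefl)
  · intro h
    exact ⟨G.ne_of_adj h, Or.inl ⟨h, fun hh => G.irrefl hh.1⟩⟩

lemma localComp_localComp : localComp (localComp G v) v = G := by
  ext x y
  by_cases hxy : x = y
  · subst hxy; simp
  · simp only [localComp_adj, localComp_adj_v, hxy, ne_eq, not_false_eq_true, true_and, Xor']
    by_cases h1 : G.Adj x y <;> by_cases h2 : G.Adj v x <;> by_cases h3 : G.Adj v y <;> simp [h1, h2, h3, hxy] <;>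
      exact ⟨G.ne_of_adj h2, G.ne_of_adj h3⟩

open Classical in
noncomputable def najiMap (β : V → V → ZMod 2) : V → V → ZMod 2 :=
  fun x y => β x y + if (x ≠ v ∧ y ≠ v ∧ x ≠ y ∧
      ((G.Adj x y ∧ (G.Adj v x ↔ G.Adj v y)) ∨ (¬ G.Adj x y ∧ G.Adj v x))) then β v y else 0

variable (β : V → V → ZMod 2)

lemma najiMap_v (y : V) : najiMap G v β v y = β v y := by
  simp [najiMap]

lemma najiMap_to_v (x : V) : najiMap G v β x v = β x v := by
  simp [najiMap]

lemma najiMap_pos {x y : V} (hx : x ≠ v) (hy : y ≠ v) (hxy : x ≠ y)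
    (h : (G.Adj x y ∧ (G.Adj v x ↔ G.Adj v y)) ∨ (¬ G.Adj x y ∧ G.Adj v x)) :
    najiMap G v β x y = β x y + β v y := by
  simp only [najiMap]
  rw [if_pos ⟨hx, hy, hxy, h⟩]

lemma najiMap_neg {x y : V}
    (h : ¬ ((G.Adj x y ∧ (G.Adj v x ↔ G.Adj v y)) ∨ (¬ G.Adj x y ∧ G.Adj v x))) :
    najiMap G v β x y = β x y := by
  simp only [najiMap]
  rw [if_neg (fun hh => h hh.2.2.2), add_zero]

lemma najiMap_najiMap : najiMap G v (najiMap G v β) = β := by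
  funext x y
  simp only [najiMap]
  have hvv : ¬ ((v:V) ≠ v ∧ y ≠ v ∧ (v:V) ≠ y ∧
      ((G.Adj v y ∧ (G.Adj v v ↔ G.Adj v y)) ∨ (¬ G.Adj v y ∧ G.Adj v v))) :=
    fun h => h.1 rfl
  rw [if_neg hvv, add_zero]
  by_cases hC : (x ≠ v ∧ y ≠ v ∧ x ≠ y ∧
      ((G.Adj x y ∧ (G.Adj v x ↔ G.Adj v y)) ∨ (¬ G.Adj x y ∧ G.Adj v x)))
  · rw [if_pos hC, add_assoc, CharTwo.add_self_eq_zero, add_zero]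
  · rw [if_neg hC, add_zero, add_zero]

end helpers

section zmodlems
set_option synthInstance.maxHeartbeats 1000000
set_option maxHeartbeats 2000000
set_option maxRecDepth 8000
set_option synthInstance.maxSize 2000

lemma zA1 : ∀ a b c d : ZMod 2, a + b = 1 → c + d = 0 → a + d + (b + c) = 1 := by decide
lemma zA2 : ∀ a b c d : ZMod 2, a + b + c + d = 1 → c + b + (d + a) = 1 := by decide
lemma zB1 : ∀ a b c : ZMod 2, a + b = 0 → a + c = 0 → b + c = 0 := by decide
lemma zB2 : ∀ a b c d : ZMod 2, a + b = 0 → c + d = 0 → a + c + (b + d) = 0 := by decide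
lemma zB3 : ∀ pv pq vq qv pr qr rq rp vp : ZMod 2, pv+pq+vq+qv=1 → pq+pr+qr+rq=1 →
    qv+qr=0 → vp+pv=1 → pr+rp=1 → rp+vp+(rq+vq)=0 := by decide
lemma zB4 : ∀ qv qp vp pv qr pr rp rq vq : ZMod 2, qv+qp+vp+pv=1 → qp+qr+pr+rp=1 →
    pv+pr=0 → vq+qv=1 → qr+rq=1 → rp+vp+(rq+vq)=0 := by decide
lemma zB5 : ∀ rp rq pq qp vp vq : ZMod 2, rp+rq+pq+qp=1 → vp+vq+pq+qp=1 →
    rp+vp+(rq+vq)=0 := by decide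
lemma zC1 : ∀ a b c d : ZMod 2, a + b = 1 → c + d + (a + d) + (b + c) = 1 := by decide
lemma zC2 : ∀ pq pr qr rq vp vq vr : ZMod 2, pq+pr+qr+rq=1 → vp+vq=0 → vp+vr=0 →
    pq+vq+(pr+vr)+qr+rq=1 := by decide
lemma zC3 : ∀ pq pr qr rq vr : ZMod 2, pq+pr+qr+rq=1 → pq+(pr+vr)+(qr+vr)+rq=1 := by decide
lemma zC4 : ∀ pq pr qr rq vq : ZMod 2, pq+pr+qr+rq=1 → pq+vq+pr+qr+(rq+vq)=1 := by decide
lemma zC5 : ∀ qv qp vp pv rv rp pq pr vq vr qr rq : ZMod 2, qv+qp+vp+pv=1 → rv+rp+vp+pv=1 →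
    pq+qp=1 → pr+rp=1 → vq+qv=1 → vr+rv=1 → qr+rq=1 →
    pq+pr+(qr+vr)+(rq+vq)=1 := by decide
lemma zC6 : ∀ vp vq pq qp pv pr vr rv rq qr : ZMod 2, vp+vq+pq+qp=1 → pv+pr+vr+rv=1 →
    rv+rq=0 → qp+qr=0 → vp+pv=1 → pq+vq+pr+(qr+vr)+rq=1 := by decide
lemma zC7 : ∀ vp vr pr rp pv pq vq qv qr rq : ZMod 2, vp+vr+pr+rp=1 → pv+pq+vq+qv=1 →
    qv+qr=0 → rp+rq=0 → vp+pv=1 → pq+(pr+vr)+qr+(rq+vq)=1 := by decide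
lemma zC8 : ∀ pq pr qr rq vq vr : ZMod 2, pq+pr=0 → qr+rq=1 →
    pq+vq+(pr+vr)+(qr+vr)+(rq+vq)=1 := by decide

end zmodlems

section mainlemma
variable {V : Type*} (G : SimpleGraph V) (v : V) (β : V → V → ZMod 2)

lemma adj_iff_of_not_adj' {x y : V} (hxy : x ≠ y) (h : ¬ (localComp G v).Adj x y) :
    G.Adj x y ↔ (G.Adj v x ∧ G.Adj v y) := by
  have h2 : ¬ Xor' (G.Adj x y) (G.Adj v x ∧ G.Adj v y) := fun hx => h ⟨hxy, hx⟩
  unfold Xor' Xor at h2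
  tauto

lemma adj_of_adj'₁ {x y : V} (h : (localComp G v).Adj x y)
    (hn : ¬ (G.Adj v x ∧ G.Adj v y)) : G.Adj x y := by
  rcases h.2 with ⟨h1, _⟩ | ⟨h1, _⟩
  · exact h1
  · exact absurd h1 hn

lemma not_adj_of_adj' {x y : V} (h : (localComp G v).Adj x y)
    (hn : G.Adj v x ∧ G.Adj v y) : ¬ G.Adj x y := by
  rcases h.2 with ⟨_, h2⟩ | ⟨_, h2⟩
  · exact absurd hn h2
  · exact h2

lemma najiMap_solution (hβ : NajiSolution G β) :
    NajiSolution (localComp G v) (najiMap G v β) := by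
  obtain ⟨h0, ha, hb, hc⟩ := hβ
  refine ⟨?_, ?_, ?_, ?_⟩
  · -- diagonal
    intro x
    have hx : najiMap G v β x x = β x x := by
      simp only [najiMap]
      rw [if_neg (fun h => h.2.2.1 rfl), add_zero]
    rw [hx]; exact h0 x
  · -- equation (a)
    intro x y hxy
    obtain ⟨hne, hxor⟩ := hxy
    by_cases hx : x = v
    · subst hx
      have hadj : G.Adj x y := by
        rcases hxor with ⟨h, _⟩ | ⟨⟨hvv, _⟩, _⟩
        · exact h
        · exact absurd hvv (G.irrefl)
      rw [najiMap_v, najiMap_to_v]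
      exact ha x y hadj
    · by_cases hy : y = v
      · subst hy
        have hadj : G.Adj x y := by
          rcases hxor with ⟨h, _⟩ | ⟨⟨_, hvv⟩, _⟩
          · exact h
          · exact absurd hvv (G.irrefl)
        rw [najiMap_to_v, najiMap_v]
        exact ha x y hadj
      · by_cases hA : G.Adj x y
        · have hnn : ¬ (G.Adj v x ∧ G.Adj v y) := by
            rcases hxor with ⟨_, h⟩ | ⟨_, h⟩
            · exact h
            · exact absurd hA h
          have hA' : G.Adj y x := hA.symm
          by_cases hNx : G.Adj v x
          · have hNy : ¬ G.Adj v y := fun h => hnn ⟨hNx, h⟩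
            rw [najiMap_neg G v β (by tauto), najiMap_neg G v β (by tauto)]
            exact ha x y hA
          · by_cases hNy : G.Adj v y
            · rw [najiMap_neg G v β (by tauto), najiMap_neg G v β (by tauto)]
              exact ha x y hA
            · rw [najiMap_pos G v β hx hy hne (Or.inl ⟨hA, iff_of_false hNx hNy⟩),
                najiMap_pos G v β hy hx (Ne.symm hne) (Or.inl ⟨hA', iff_of_false hNy hNx⟩)]
              have h1 := ha x y hA
              have h2 := hb x y v hne hx hy hA (fun h => hNx h.symm) (fun h => hNy h.symm)
              exact zA1 _ _ _ _ h1 h2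
        · have hvxy : G.Adj v x ∧ G.Adj v y := by
            rcases hxor with ⟨h, _⟩ | ⟨h, _⟩
            · exact absurd h hA
            · exact h
          rw [najiMap_pos G v β hx hy hne (Or.inr ⟨hA, hvxy.1⟩),
            najiMap_pos G v β hy hx (Ne.symm hne) (Or.inr ⟨fun h => hA h.symm, hvxy.2⟩)]
          have h3 := hc v x y (G.ne_of_adj hvxy.1) (G.ne_of_adj hvxy.2) hne hvxy.1 hvxy.2 hA
          exact zA2 _ _ _ _ h3
  · -- equation (b)
    intro p q r hpq hpr hqr hApq hApr hAqr
    by_cases hrv : r = v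
    · subst hrv
      have hNp : ¬ G.Adj r p := fun h => hApr (((localComp_adj_v G r).mpr h).symm)
      have hNq : ¬ G.Adj r q := fun h => hAqr (((localComp_adj_v G r).mpr h).symm)
      have hadj : G.Adj p q := adj_of_adj'₁ G r hApq (fun hh => hNp hh.1)
      rw [najiMap_v, najiMap_v]
      exact hb p q r hpq hpr hqr hadj (fun h => hNp h.symm) (fun h => hNq h.symm)
    by_cases hpv : p = v
    · subst hpv
      have hNq : G.Adj p q := (localComp_adj_v G p).mp hApq
      have hNr : ¬ G.Adj p r := fun h => hApr ((localComp_adj_v G p).mpr h)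
      have hqr' : ¬ G.Adj q r := fun h =>
        hNr ((adj_iff_of_not_adj' G p hqr hAqr).mp h).2
      have hrq' : ¬ G.Adj r q := fun h => hqr' h.symm
      rw [najiMap_to_v, najiMap_neg G p β (by tauto)]
      exact hb p q r hpq hpr hqr hNq hNr hqr'
    by_cases hqv : q = v
    · subst hqv
      have hNp : G.Adj q p := (localComp_adj_v G q).mp hApq.symm
      have hNr : ¬ G.Adj q r := fun h => hAqr ((localComp_adj_v G q).mpr h)
      have hpr' : ¬ G.Adj p r := fun h =>
        hNr ((adj_iff_of_not_adj' G q hpr hApr).mp h).2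
      have hrp' : ¬ G.Adj r p := fun h => hpr' h.symm
      rw [najiMap_to_v, najiMap_neg G q β (by tauto), add_comm]
      exact hb q p r (Ne.symm hpq) hqr hpr hNp hNr hpr'
    · have EPR := adj_iff_of_not_adj' G v hpr hApr
      have EQR := adj_iff_of_not_adj' G v hqr hAqr
      by_cases hNr : G.Adj v r
      · by_cases hNp : G.Adj v p <;> by_cases hNq : G.Adj v q
        · -- Np = 1, Nq = 1, Nr = 1
          have hpq' : ¬ G.Adj p q := not_adj_of_adj' G v hApq ⟨hNp, hNq⟩
          have hpr' : G.Adj p r := EPR.mpr ⟨hNp, hNr⟩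
          have hqr' : G.Adj q r := EQR.mpr ⟨hNq, hNr⟩
          rw [najiMap_pos G v β hrv hpv (Ne.symm hpr) (Or.inl ⟨hpr'.symm, iff_of_true hNr hNp⟩),
            najiMap_pos G v β hrv hqv (Ne.symm hqr) (Or.inl ⟨hqr'.symm, iff_of_true hNr hNq⟩)]
          have h1 := hc r p q (Ne.symm hpr) (Ne.symm hqr) hpq hpr'.symm hqr'.symm hpq'
          have h2 := hc v p q (Ne.symm hpv) (Ne.symm hqv) hpq hNp hNq hpq'
          exact zB5 _ _ _ _ _ _ h1 h2
        · -- Np = 1, Nq = 0, Nr = 1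
          have hpq' : G.Adj p q := adj_of_adj'₁ G v hApq (fun hh => hNq hh.2)
          have hpr' : G.Adj p r := EPR.mpr ⟨hNp, hNr⟩
          have hqr' : ¬ G.Adj q r := fun h => hNq (EQR.mp h).1
          rw [najiMap_pos G v β hrv hpv (Ne.symm hpr) (Or.inl ⟨hpr'.symm, iff_of_true hNr hNp⟩),
            najiMap_pos G v β hrv hqv (Ne.symm hqr) (Or.inr ⟨fun h => hqr' h.symm, hNr⟩)]
          have h1 := hc p v q hpv hpq (Ne.symm hqv) hNp.symm hpq' hNq
          have h2 := hc p q r hpq hpr hqr hpq' hpr' hqr'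
          have h3 := hb v r q (Ne.symm hrv) (Ne.symm hqv) (Ne.symm hqr) hNr hNq
            (fun h => hqr' h.symm)
          have h4 := ha v p hNp
          have h5 := ha p r hpr'
          exact zB3 _ _ _ _ _ _ _ _ _ h1 h2 h3 h4 h5
        · -- Np = 0, Nq = 1, Nr = 1
          have hpq' : G.Adj p q := adj_of_adj'₁ G v hApq (fun hh => hNp hh.1)
          have hqr' : G.Adj q r := EQR.mpr ⟨hNq, hNr⟩
          have hpr' : ¬ G.Adj p r := fun h => hNp (EPR.mp h).1
          rw [najiMap_pos G v β hrv hpv (Ne.symm hpr) (Or.inr ⟨fun h => hpr' h.symm, hNr⟩),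
            najiMap_pos G v β hrv hqv (Ne.symm hqr) (Or.inl ⟨hqr'.symm, iff_of_true hNr hNq⟩)]
          have h1 := hc q v p hqv (Ne.symm hpq) (Ne.symm hpv) hNq.symm hpq'.symm hNp
          have h2 := hc q p r (Ne.symm hpq) hqr hpr hpq'.symm hqr' hpr'
          have h3 := hb v r p (Ne.symm hrv) (Ne.symm hpv) (Ne.symm hpr) hNr hNp
            (fun h => hpr' h.symm)
          have h4 := ha v q hNq
          have h5 := ha q r hqr'
          exact zB4 _ _ _ _ _ _ _ _ _ h1 h2 h3 h4 h5
        · -- Np = 0, Nq = 0, Nr = 1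
          have hpq' : G.Adj p q := adj_of_adj'₁ G v hApq (fun hh => hNp hh.1)
          have hpr' : ¬ G.Adj p r := fun h => hNp (EPR.mp h).1
          have hqr' : ¬ G.Adj q r := fun h => hNq (EQR.mp h).1
          rw [najiMap_pos G v β hrv hpv (Ne.symm hpr) (Or.inr ⟨fun h => hpr' h.symm, hNr⟩),
            najiMap_pos G v β hrv hqv (Ne.symm hqr) (Or.inr ⟨fun h => hqr' h.symm, hNr⟩)]
          have h1 := hb p q r hpq hpr hqr hpq' hpr' hqr'
          have h2 := hb p q v hpq hpv hqv hpq' (fun h => hNp h.symm) (fun h => hNq h.symm)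
          exact zB2 _ _ _ _ h1 h2
      · -- Nr = 0
        have hpr' : ¬ G.Adj p r := fun h => hNr (EPR.mp h).2
        have hqr' : ¬ G.Adj q r := fun h => hNr (EQR.mp h).2
        have hrp' : ¬ G.Adj r p := fun h => hpr' h.symm
        have hrq' : ¬ G.Adj r q := fun h => hqr' h.symm
        rw [najiMap_neg G v β (by tauto), najiMap_neg G v β (by tauto)]
        by_cases hnn : G.Adj v p ∧ G.Adj v q
        · have hpq' : ¬ G.Adj p q := not_adj_of_adj' G v hApq hnn
          have h1 := hb v p r (Ne.symm hpv) (Ne.symm hrv) hpr hnn.1 hNr hpr'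
          have h2 := hb v q r (Ne.symm hqv) (Ne.symm hrv) hqr hnn.2 hNr hqr'
          exact zB1 _ _ _ h1 h2
        · have hpq' : G.Adj p q := adj_of_adj'₁ G v hApq hnn
          exact hb p q r hpq hpr hqr hpq' hpr' hqr'
  · -- equation (c)
    intro p q r hpq hpr hqr hApq hApr hAqr
    by_cases hpv : p = v
    · subst hpv
      have hNq : G.Adj p q := (localComp_adj_v G p).mp hApq
      have hNr : G.Adj p r := (localComp_adj_v G p).mp hApr
      have hqr' : G.Adj q r := (adj_iff_of_not_adj' G p hqr hAqr).mpr ⟨hNq, hNr⟩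
      rw [najiMap_v, najiMap_v,
        najiMap_pos G p β (G.ne_of_adj hNq).symm (G.ne_of_adj hNr).symm hqr
          (Or.inl ⟨hqr', iff_of_true hNq hNr⟩),
        najiMap_pos G p β (G.ne_of_adj hNr).symm (G.ne_of_adj hNq).symm (Ne.symm hqr)
          (Or.inl ⟨hqr'.symm, iff_of_true hNr hNq⟩)]
      exact zC1 _ _ _ _ (ha q r hqr')
    by_cases hqv : q = v
    · subst hqv
      have hNp : G.Adj q p := (localComp_adj_v G q).mp hApq.symm
      have hNr : ¬ G.Adj q r := fun h => hAqr ((localComp_adj_v G q).mpr h)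
      have hpr' : G.Adj p r := adj_of_adj'₁ G q hApr (fun hh => hNr hh.2)
      rw [najiMap_to_v, najiMap_v, najiMap_to_v,
        najiMap_neg G q β (by
          rintro (⟨_, hiff⟩ | ⟨hna, _⟩)
          · exact hNr (hiff.mp hNp)
          · exact hna hpr')]
      exact hc p q r hpq hpr hqr hNp.symm hpr' hNr
    by_cases hrv : r = v
    · subst hrv
      have hNp : G.Adj r p := (localComp_adj_v G r).mp hApr.symm
      have hNq : ¬ G.Adj r q := fun h => hAqr (((localComp_adj_v G r).mpr h).symm)
      have hpq' : G.Adj p q := adj_of_adj'₁ G r hApq (fun hh => hNq hh.2)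
      rw [najiMap_to_v, najiMap_to_v, najiMap_v,
        najiMap_neg G r β (by
          rintro (⟨_, hiff⟩ | ⟨hna, _⟩)
          · exact hNq (hiff.mp hNp)
          · exact hna hpq')]
      exact hc p q r hpq hpr hqr hpq' hNp.symm (fun h => hNq h.symm)
    · have EQR := adj_iff_of_not_adj' G v hqr hAqr
      by_cases hNp : G.Adj v p <;> by_cases hNq : G.Adj v q <;> by_cases hNr : G.Adj v r
      · -- 111
        have hpq' : ¬ G.Adj p q := not_adj_of_adj' G v hApq ⟨hNp, hNq⟩
        have hpr' : ¬ G.Adj p r := not_adj_of_adj' G v hApr ⟨hNp, hNr⟩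
        have hqr' : G.Adj q r := EQR.mpr ⟨hNq, hNr⟩
        rw [najiMap_pos G v β hpv hqv hpq (Or.inr ⟨hpq', hNp⟩),
          najiMap_pos G v β hpv hrv hpr (Or.inr ⟨hpr', hNp⟩),
          najiMap_pos G v β hqv hrv hqr (Or.inl ⟨hqr', iff_of_true hNq hNr⟩),
          najiMap_pos G v β hrv hqv (Ne.symm hqr) (Or.inl ⟨hqr'.symm, iff_of_true hNr hNq⟩)]
        have h1 := hb q r p hqr (Ne.symm hpq) (Ne.symm hpr) hqr'
          (fun h => hpq' h.symm) (fun h => hpr' h.symm)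
        exact zC8 _ _ _ _ _ _ h1 (ha q r hqr')
      · -- 110
        have hpq' : ¬ G.Adj p q := not_adj_of_adj' G v hApq ⟨hNp, hNq⟩
        have hpr' : G.Adj p r := adj_of_adj'₁ G v hApr (fun hh => hNr hh.2)
        have hqr' : ¬ G.Adj q r := fun h => hNr (EQR.mp h).2
        rw [najiMap_pos G v β hpv hqv hpq (Or.inr ⟨hpq', hNp⟩),
          najiMap_neg G v β (by
            rintro (⟨_, hiff⟩ | ⟨hna, _⟩)
            · exact hNr (hiff.mp hNp)
            · exact hna hpr'),
          najiMap_pos G v β hqv hrv hqr (Or.inr ⟨hqr', hNq⟩),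
          najiMap_neg G v β (by
            rintro (⟨hadj, _⟩ | ⟨_, hvr⟩)
            · exact hqr' hadj.symm
            · exact hNr hvr)]
        have h1 := hc v p q (Ne.symm hpv) (Ne.symm hqv) hpq hNp hNq hpq'
        have h2 := hc p v r hpv hpr (Ne.symm hrv) hNp.symm hpr' hNr
        have h3 := hb v q r (Ne.symm hqv) (Ne.symm hrv) hqr hNq hNr hqr'
        have h4 := hb p r q hpr hpq (Ne.symm hqr) hpr' hpq' (fun h => hqr' h.symm)
        have h5 := ha v p hNp
        exact zC6 _ _ _ _ _ _ _ _ _ _ h1 h2 h3 h4 h5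
      · -- 101
        have hpr' : ¬ G.Adj p r := not_adj_of_adj' G v hApr ⟨hNp, hNr⟩
        have hpq' : G.Adj p q := adj_of_adj'₁ G v hApq (fun hh => hNq hh.2)
        have hqr' : ¬ G.Adj q r := fun h => hNq (EQR.mp h).1
        rw [najiMap_neg G v β (by
            rintro (⟨_, hiff⟩ | ⟨hna, _⟩)
            · exact hNq (hiff.mp hNp)
            · exact hna hpq'),
          najiMap_pos G v β hpv hrv hpr (Or.inr ⟨hpr', hNp⟩),
          najiMap_neg G v β (by
            rintro (⟨hadj, _⟩ | ⟨_, hvq⟩)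
            · exact hqr' hadj
            · exact hNq hvq),
          najiMap_pos G v β hrv hqv (Ne.symm hqr) (Or.inr ⟨fun h => hqr' h.symm, hNr⟩)]
        have h1 := hc v p r (Ne.symm hpv) (Ne.symm hrv) hpr hNp hNr hpr'
        have h2 := hc p v q hpv hpq (Ne.symm hqv) hNp.symm hpq' hNq
        have h3 := hb v r q (Ne.symm hrv) (Ne.symm hqv) (Ne.symm hqr) hNr hNq
          (fun h => hqr' h.symm)
        have h4 := hb p q r hpq hpr hqr hpq' hpr' hqr'
        have h5 := ha v p hNp
        exact zC7 _ _ _ _ _ _ _ _ _ _ h1 h2 h3 h4 h5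
      · -- 100
        have hpq' : G.Adj p q := adj_of_adj'₁ G v hApq (fun hh => hNq hh.2)
        have hpr' : G.Adj p r := adj_of_adj'₁ G v hApr (fun hh => hNr hh.2)
        have hqr' : ¬ G.Adj q r := fun h => hNq (EQR.mp h).1
        rw [najiMap_neg G v β (by
            rintro (⟨_, hiff⟩ | ⟨hna, _⟩)
            · exact hNq (hiff.mp hNp)
            · exact hna hpq'),
          najiMap_neg G v β (by
            rintro (⟨_, hiff⟩ | ⟨hna, _⟩)
            · exact hNr (hiff.mp hNp)
            · exact hna hpr'),
          najiMap_neg G v β (by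
            rintro (⟨hadj, _⟩ | ⟨_, hvq⟩)
            · exact hqr' hadj
            · exact hNq hvq),
          najiMap_neg G v β (by
            rintro (⟨hadj, _⟩ | ⟨_, hvr⟩)
            · exact hqr' hadj.symm
            · exact hNr hvr)]
        exact hc p q r hpq hpr hqr hpq' hpr' hqr'
      · -- 011
        have hpq' : G.Adj p q := adj_of_adj'₁ G v hApq (fun hh => hNp hh.1)
        have hpr' : G.Adj p r := adj_of_adj'₁ G v hApr (fun hh => hNp hh.1)
        have hqr' : G.Adj q r := EQR.mpr ⟨hNq, hNr⟩
        rw [najiMap_neg G v β (by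
            rintro (⟨_, hiff⟩ | ⟨hna, _⟩)
            · exact hNp (hiff.mpr hNq)
            · exact hna hpq'),
          najiMap_neg G v β (by
            rintro (⟨_, hiff⟩ | ⟨hna, _⟩)
            · exact hNp (hiff.mpr hNr)
            · exact hna hpr'),
          najiMap_pos G v β hqv hrv hqr (Or.inl ⟨hqr', iff_of_true hNq hNr⟩),
          najiMap_pos G v β hrv hqv (Ne.symm hqr) (Or.inl ⟨hqr'.symm, iff_of_true hNr hNq⟩)]
        have h1 := hc q v p hqv (Ne.symm hpq) (Ne.symm hpv) hNq.symm hpq'.symm hNp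
        have h2 := hc r v p hrv (Ne.symm hpr) (Ne.symm hpv) hNr.symm hpr'.symm hNp
        exact zC5 _ _ _ _ _ _ _ _ _ _ _ _ h1 h2 (ha p q hpq') (ha p r hpr')
          (ha v q hNq) (ha v r hNr) (ha q r hqr')
      · -- 010
        have hpq' : G.Adj p q := adj_of_adj'₁ G v hApq (fun hh => hNp hh.1)
        have hpr' : G.Adj p r := adj_of_adj'₁ G v hApr (fun hh => hNp hh.1)
        have hqr' : ¬ G.Adj q r := fun h => hNr (EQR.mp h).2
        rw [najiMap_neg G v β (by
            rintro (⟨_, hiff⟩ | ⟨hna, _⟩)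
            · exact hNp (hiff.mpr hNq)
            · exact hna hpq'),
          najiMap_pos G v β hpv hrv hpr (Or.inl ⟨hpr', iff_of_false hNp hNr⟩),
          najiMap_pos G v β hqv hrv hqr (Or.inr ⟨hqr', hNq⟩),
          najiMap_neg G v β (by
            rintro (⟨hadj, _⟩ | ⟨_, hvr⟩)
            · exact hqr' hadj.symm
            · exact hNr hvr)]
        exact zC3 _ _ _ _ _ (hc p q r hpq hpr hqr hpq' hpr' hqr')
      · -- 001
        have hpq' : G.Adj p q := adj_of_adj'₁ G v hApq (fun hh => hNp hh.1)
        have hpr' : G.Adj p r := adj_of_adj'₁ G v hApr (fun hh => hNp hh.1)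
        have hqr' : ¬ G.Adj q r := fun h => hNq (EQR.mp h).1
        rw [najiMap_pos G v β hpv hqv hpq (Or.inl ⟨hpq', iff_of_false hNp hNq⟩),
          najiMap_neg G v β (by
            rintro (⟨_, hiff⟩ | ⟨hna, _⟩)
            · exact hNp (hiff.mpr hNr)
            · exact hna hpr'),
          najiMap_neg G v β (by
            rintro (⟨hadj, _⟩ | ⟨_, hvq⟩)
            · exact hqr' hadj
            · exact hNq hvq),
          najiMap_pos G v β hrv hqv (Ne.symm hqr) (Or.inr ⟨fun h => hqr' h.symm, hNr⟩)]
        exact zC4 _ _ _ _ _ (hc p q r hpq hpr hqr hpq' hpr' hqr')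
      · -- 000
        have hpq' : G.Adj p q := adj_of_adj'₁ G v hApq (fun hh => hNp hh.1)
        have hpr' : G.Adj p r := adj_of_adj'₁ G v hApr (fun hh => hNp hh.1)
        have hqr' : ¬ G.Adj q r := fun h => hNq (EQR.mp h).1
        rw [najiMap_pos G v β hpv hqv hpq (Or.inl ⟨hpq', iff_of_false hNp hNq⟩),
          najiMap_pos G v β hpv hrv hpr (Or.inl ⟨hpr', iff_of_false hNp hNr⟩),
          najiMap_neg G v β (by
            rintro (⟨hadj, _⟩ | ⟨_, hvq⟩)
            · exact hqr' hadj
            · exact hNq hvq),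
          najiMap_neg G v β (by
            rintro (⟨hadj, _⟩ | ⟨_, hvr⟩)
            · exact hqr' hadj.symm
            · exact hNr hvr)]
        have h1 := hc p q r hpq hpr hqr hpq' hpr' hqr'
        have h2 := hb p q v hpq hpv hqv hpq' (fun h => hNp h.symm) (fun h => hNq h.symm)
        have h3 := hb p r v hpr hpv hrv hpr' (fun h => hNp h.symm) (fun h => hNr h.symm)
        exact zC2 _ _ _ _ _ _ _ h1 h2 h3
end mainlemma


lemma najiMap_card_le {V : Type*} [Fintype V] [DecidableEq V]
    (G : SimpleGraph V) (v : V) :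
    Nat.card {β : V → V → ZMod 2 // NajiSolution G β} ≤
      Nat.card {β : V → V → ZMod 2 // NajiSolution (localComp G v) β} := by
  have hf : Function.Injective (fun b : {β : V → V → ZMod 2 // NajiSolution G β} =>
      (⟨najiMap G v b.1, najiMap_solution G v b.1 b.2⟩ :
        {β : V → V → ZMod 2 // NajiSolution (localComp G v) β})) := by
    intro b1 b2 h
    have h' : najiMap G v b1.1 = najiMap G v b2.1 := congrArg Subtype.val h
    have h2 := congrArg (najiMap G v) h'
    rw [najiMap_najiMap, najiMap_najiMap] at h2
    exact Subtype.ext h2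
  exact Nat.card_le_card_of_injective _ hf

/-- Local complementation preserves the number of Naji solutions. -/
theorem card_najiSolutions_localComp {V : Type*} [Fintype V] [DecidableEq V]
    (G : SimpleGraph V) (v : V) :
    Nat.card {β : V → V → ZMod 2 // NajiSolution G β} =
      Nat.card {β : V → V → ZMod 2 // NajiSolution (localComp G v) β} := by
  refine le_antisymm (najiMap_card_le G v) ?_
  have h2 := najiMap_card_le (localComp G v) v
  rwa [localComp_localComp] at h2
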